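/- For the symmetric advection system ẋ = (G₃ − G̃₃)(x) on N = 4 sites, the quantities x₀(t)² + x₂(t)² and x₁(t)² + x₃(t)² are both conserved along solutions. -/

import Mathlib

lemma zmodfix1 : ((0:ZMod 4) - 1) = 3 := by decide
lemma zmodfix2 : ((0:ZMod 4) - 2) = 2 := by decide
lemma zmodfix4 : ((2:ZMod 4) + 2) = 0 := by decide
lemma zmodfix5 : ((3:ZMod 4) + 2) = 1 := by decide
lemma zmodfix6 : ((3:ZMod 4) + 1) = 0 := by decide
lemma zmodfix7 : ((1:ZMod 4) - 2) = 3 := by decide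
lemma zmodfix8 : ((1:ZMod 4) - 1) = 0 := by decide
lemma const_of_hasDerivAt_zero {f : ℝ → ℝ} (h : ∀ t, HasDerivAt f 0 t) :
    ∀ s t : ℝ, f s = f t := by
  intro s t
  exact is_const_of_deriv_eq_zero (fun u => (h u).differentiableAt)
    (fun u => (h u).deriv) s t

/-- For the symmetric advection system `ẋ_i = x_{i+1}x_{i+2} − x_{i−1}x_{i−2}` on `N = 4`
cyclic sites, the quantities `x₀² + x₂²` and `x₁² + x₃²` are both conserved. -/
theorem symmetric_advection_N4_conserved
    (x : ℝ → ZMod 4 → ℝ)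
    (hx : ∀ (t : ℝ) (i : ZMod 4),
      HasDerivAt (fun s => x s i)
        (x t (i + 1) * x t (i + 2) - x t (i - 1) * x t (i - 2)) t) :
    ∀ s t : ℝ,
      (x s 0 ^ 2 + x s 2 ^ 2 = x t 0 ^ 2 + x t 2 ^ 2) ∧
      (x s 1 ^ 2 + x s 3 ^ 2 = x t 1 ^ 2 + x t 3 ^ 2) := by
  have heven : ∀ t, HasDerivAt (fun s => x s 0 ^ 2 + x s 2 ^ 2) 0 t := by
    intro t
    have h0 := hx t 0
    have h2 := hx t 2
    norm_num at h0 h2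
    simp only [show ((-1):ZMod 4)=3 by decide, show ((-2):ZMod 4)=2 by decide, show ((4):ZMod 4)=0 by decide, show ((5):ZMod 4)=1 by decide] at h0 h2
    have := ((h0.pow 2).add (h2.pow 2))
    convert this using 1
    case e'_9 => ring_nf
    all_goals rfl
  have hodd : ∀ t, HasDerivAt (fun s => x s 1 ^ 2 + x s 3 ^ 2) 0 t := by
    intro t
    have h1 := hx t 1
    have h3 := hx t 3
    norm_num at h1 h3
    simp only [show ((-1):ZMod 4)=3 by decide, show ((-2):ZMod 4)=2 by decide, show ((4):ZMod 4)=0 by decide, show ((5):ZMod 4)=1 by decide] at h1 h3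
    have := ((h1.pow 2).add (h3.pow 2))
    convert this using 1
    case e'_9 => ring_nf
    all_goals rfl
  intro s t
  exact ⟨const_of_hasDerivAt_zero heven s t, const_of_hasDerivAt_zero hodd s t⟩
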